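/- Let A be a 3×3 zero-one coloring matrix with rows (1,1,1), (0,1,0), (0,0,1). Then for all n ≥ 1, the total number of A-colored plane trees on n vertices is (2^n + 1)·C_{n-1}; specifically, there are C_{n-1} trees with root color 2, C_{n-1} trees with root color 3, and (2^n − 1)·C_{n-1} trees with root color 1 for n ≥ 2. -/

import Mathlib

inductive CTree (α : Type) : Type
  | node : α → List (CTree α) → CTree α

namespace CTree

def color {α : Type} : CTree α → α
  | node c _ => c

def children {α : Type} : CTree α → List (CTree α)
  | node _ ts => ts

def size {α : Type} : CTree α → ℕ
  | node _ ts => 1 + (ts.attach.map fun t => size t.1).sum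
decreasing_by
  have := List.sizeOf_lt_of_mem t.2
  simp only [CTree.node.sizeOf_spec]
  omega

def Valid {α : Type} (A : Matrix α α ℕ) : CTree α → Prop
  | node c ts => ∀ t ∈ ts, A c t.color = 1 ∧ Valid A t

end CTree

/-- Number of `A`-colored plane trees with `n` vertices and root color `i`. -/
noncomputable def colorCount {m : ℕ} (A : Matrix (Fin m) (Fin m) ℕ) (i : Fin m) (n : ℕ) : ℕ :=
  {t : CTree (Fin m) | t.Valid A ∧ t.size = n ∧ t.color = i}.ncard

/-- Total number of `A`-colored plane trees with `n` vertices. -/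
noncomputable def totalCount {α : Type} (A : Matrix α α ℕ) (n : ℕ) : ℕ :=
  {t : CTree α | t.Valid A ∧ t.size = n}.ncard

namespace Stmt18Aux

open CTree
open scoped Classical

lemma size_node {α : Type} (c : α) (ts : List (CTree α)) :
    (CTree.node c ts).size = 1 + (ts.map CTree.size).sum := by
  rw [CTree.size]
  congr 1
  rw [← List.attach_map_val (l := ts) (f := CTree.size)]

lemma size_pos {α : Type} (t : CTree α) : 0 < t.size := by
  cases t with
  | node c ts => rw [size_node]; omega

lemma valid_node {α : Type} (A : Matrix α α ℕ) (c : α) (ts : List (CTree α)) :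
    CTree.Valid A (CTree.node c ts) ↔ ∀ t ∈ ts, A c t.color = 1 ∧ CTree.Valid A t := by
  rw [CTree.Valid]

abbrev F3 := Fin 3

/-- Finset of all lists of trees whose sizes sum to `n`. -/
noncomputable def LF : ℕ → Finset (List (CTree F3))
  | 0 => {[]}
  | (n+1) => (Finset.range (n+1)).attach.biUnion fun k =>
      ((Finset.univ.biUnion fun c : F3 => (LF k.1).image (CTree.node c)) ×ˢ LF (n - k.1)).image
        fun p => p.1 :: p.2
decreasing_by
  all_goals (have := Finset.mem_range.mp k.2; omega)

lemma mem_LF : ∀ (n : ℕ) (l : List (CTree F3)), l ∈ LF n ↔ (l.map CTree.size).sum = n := by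
  intro n
  induction n using Nat.strong_induction_on with
  | _ n ih =>
    match n with
    | 0 =>
      intro l
      rw [LF]
      simp only [Finset.mem_singleton]
      constructor
      · rintro rfl; simp
      · intro h
        cases l with
        | nil => rfl
        | cons a l => exfalso; have := size_pos a; simp at h; omega
    | (n+1) =>
      intro l
      rw [LF]
      simp only [Finset.mem_biUnion, Finset.mem_attach, Finset.mem_image, Finset.mem_product,
        Finset.mem_univ, true_and, Subtype.exists, Finset.mem_range, Prod.exists]
      constructor
      · rintro ⟨k, hk, ⟨h, tl, ⟨⟨c, l', hl', rfl⟩, htl⟩, rfl⟩⟩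
        have h1 := (ih k hk l').mp hl'
        have h2 := (ih (n - k) (by omega) tl).mp htl
        simp only [List.map_cons, List.sum_cons, size_node, h1, h2]
        omega
      · intro hsum
        cases l with
        | nil => simp at hsum
        | cons h tl =>
          cases h with
          | node c l' =>
            simp only [List.map_cons, List.sum_cons, size_node] at hsum
            set s := (l'.map CTree.size).sum with hs
            have hsle : s ≤ n := by omega
            refine ⟨s, by omega, CTree.node c l', tl, ⟨⟨c, l', ?_, rfl⟩, ?_⟩, rfl⟩
            · exact (ih s (by omega) l').mpr rfl
            · exact (ih (n - s) (by omega) tl).mpr (by omega)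

/-- Finset of all trees of size `n`. -/
noncomputable def TF : ℕ → Finset (CTree F3)
  | 0 => ∅
  | (n+1) => Finset.univ.biUnion fun c : F3 => (LF n).image (CTree.node c)

lemma mem_TF (n : ℕ) (t : CTree F3) : t ∈ TF n ↔ t.size = n := by
  cases n with
  | zero =>
    simp only [TF, Finset.notMem_empty, false_iff]
    have := size_pos t; omega
  | succ n =>
    cases t with
    | node c ts =>
      simp only [TF, Finset.mem_biUnion, Finset.mem_univ, true_and, Finset.mem_image]
      constructor
      · rintro ⟨c', l, hl, h⟩
        injection h with h1 h2
        subst h1 h2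
        rw [size_node, (mem_LF n l).mp hl]
        omega
      · intro h
        rw [size_node] at h
        exact ⟨c, ts, (mem_LF n ts).mpr (by omega), rfl⟩


def Am : Matrix F3 F3 ℕ := !![1, 1, 1; 0, 1, 0; 0, 0, 1]

noncomputable def cnt (c : F3) (n : ℕ) : ℕ :=
  ((TF n).filter fun t => t.Valid Am ∧ t.color = c).card

noncomputable def tcnt (P : CTree F3 → Prop) (n : ℕ) : ℕ := ((TF n).filter P).card

noncomputable def lcnt (P : CTree F3 → Prop) (n : ℕ) : ℕ :=
  ((LF n).filter fun l => ∀ t ∈ l, P t).card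

lemma cnt_zero (c : F3) : cnt c 0 = 0 := by
  simp [cnt, TF]

lemma lcnt_zero (P : CTree F3 → Prop) : lcnt P 0 = 1 := by
  rw [lcnt, LF]
  rw [Finset.filter_singleton]
  simp

lemma node_injective (c : F3) : Function.Injective (CTree.node c) := by
  intro a b h
  injection h

lemma cnt_succ (c : F3) (n : ℕ) :
    cnt c (n + 1) = lcnt (fun t => t.Valid Am ∧ Am c t.color = 1) n := by
  rw [cnt, lcnt]
  rw [show ((TF (n+1)).filter fun t => t.Valid Am ∧ t.color = c) =
      ((LF n).filter fun l => ∀ t ∈ l, t.Valid Am ∧ Am c t.color = 1).image (CTree.node c) from ?_]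
  · rw [Finset.card_image_of_injective _ (node_injective c)]
    congr!
  · ext t
    simp only [Finset.mem_filter, Finset.mem_image, mem_TF, mem_LF]
    constructor
    · rintro ⟨hsize, hval, hcol⟩
      cases t with
      | node c' ts =>
        have : c' = c := hcol
        subst this
        rw [size_node] at hsize
        rw [valid_node] at hval
        exact ⟨ts, ⟨by omega, fun t ht => ⟨(hval t ht).2, (hval t ht).1⟩⟩, rfl⟩
    · rintro ⟨l, ⟨hsum, hP⟩, rfl⟩
      refine ⟨by rw [size_node]; omega, ?_, rfl⟩
      rw [valid_node]
      exact fun t ht => ⟨(hP t ht).2, (hP t ht).1⟩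

lemma cons_injective : Function.Injective (fun p : CTree F3 × List (CTree F3) => p.1 :: p.2) := by
  rintro ⟨a, b⟩ ⟨a', b'⟩ h
  simp only [List.cons.injEq] at h
  simp [h.1, h.2]

lemma lcnt_succ (P : CTree F3 → Prop) (n : ℕ) :
    lcnt P (n + 1) = ∑ k ∈ Finset.range (n + 1), tcnt P (k + 1) * lcnt P (n - k) := by
  rw [lcnt]
  rw [show ((LF (n+1)).filter fun l => ∀ t ∈ l, P t) =
      (Finset.range (n+1)).biUnion (fun k =>
        (((TF (k+1)).filter P) ×ˢ ((LF (n-k)).filter fun l => ∀ t ∈ l, P t)).image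
          fun p => p.1 :: p.2) from ?_]
  · rw [Finset.card_biUnion]
    · refine Finset.sum_congr rfl fun k _ => ?_
      rw [Finset.card_image_of_injective _ cons_injective, Finset.card_product]
      rfl
    · intro k _ k' _ hkk'
      rw [Function.onFun, Finset.disjoint_left]
      rintro l hl hl'
      simp only [Finset.mem_image, Finset.mem_product, Finset.mem_filter, mem_TF] at hl hl'
      obtain ⟨⟨h, tl⟩, ⟨⟨hh, _⟩, _⟩, rfl⟩ := hl
      obtain ⟨⟨h', tl'⟩, ⟨⟨hh', _⟩, _⟩, heq⟩ := hl'
      simp only [List.cons.injEq] at heq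
      apply hkk'
      rw [heq.1] at hh'
      dsimp only at hh hh'
      omega
  · ext l
    simp only [Finset.mem_filter, Finset.mem_biUnion, Finset.mem_range, Finset.mem_image,
      Finset.mem_product, mem_LF, mem_TF, Prod.exists]
    constructor
    · rintro ⟨hsum, hP⟩
      cases l with
      | nil => simp at hsum
      | cons h tl =>
        simp only [List.map_cons, List.sum_cons] at hsum
        have hp := size_pos h
        refine ⟨h.size - 1, by omega, h, tl, ⟨⟨by omega, hP h (by simp)⟩,
          ⟨by omega, fun t ht => hP t (by simp [ht])⟩⟩, rfl⟩
    · rintro ⟨k, hk, h, tl, ⟨⟨hh, hPh⟩, ⟨htl, hPtl⟩⟩, rfl⟩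
      refine ⟨?_, ?_⟩
      · simp only [List.map_cons, List.sum_cons, hh, htl]; omega
      · intro t ht
        rcases List.mem_cons.mp ht with rfl | ht'
        · exact hPh
        · exact hPtl t ht'


lemma row0 (x : F3) : Am 0 x = 1 := by revert x; decide
lemma row1 (x : F3) : Am 1 x = 1 ↔ x = 1 := by revert x; decide
lemma row2 (x : F3) : Am 2 x = 1 ↔ x = 2 := by revert x; decide

lemma tcnt1 (n : ℕ) : tcnt (fun t => t.Valid Am ∧ Am 1 t.color = 1) n = cnt 1 n := by
  rw [tcnt, cnt]
  congr 1
  ext t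
  simp only [Finset.mem_filter, row1]

lemma tcnt2 (n : ℕ) : tcnt (fun t => t.Valid Am ∧ Am 2 t.color = 1) n = cnt 2 n := by
  rw [tcnt, cnt]
  congr 1
  ext t
  simp only [Finset.mem_filter, row2]

lemma valid_split (n : ℕ) :
    ((TF n).filter fun t => t.Valid Am).card = cnt 0 n + cnt 1 n + cnt 2 n := by
  have h : ((TF n).filter fun t => t.Valid Am) =
      Finset.univ.biUnion (fun c : F3 => (TF n).filter fun t => t.Valid Am ∧ t.color = c) := by
    ext t
    simp only [Finset.mem_filter, Finset.mem_biUnion, Finset.mem_univ, true_and]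
    constructor
    · rintro ⟨ht, hv⟩; exact ⟨t.color, ht, hv, rfl⟩
    · rintro ⟨c, ht, hv, _⟩; exact ⟨ht, hv⟩
  rw [h, Finset.card_biUnion]
  · rw [Fin.sum_univ_three]; rfl
  · intro c _ c' _ hcc'
    rw [Function.onFun, Finset.disjoint_left]
    rintro t ht ht'
    simp only [Finset.mem_filter] at ht ht'
    exact hcc' (ht.2.2 ▸ ht'.2.2 ▸ rfl)

lemma tcnt0 (n : ℕ) :
    tcnt (fun t => t.Valid Am ∧ Am 0 t.color = 1) n = cnt 0 n + cnt 1 n + cnt 2 n := by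
  rw [← valid_split, tcnt]
  congr 1
  ext t
  simp only [Finset.mem_filter, row0, and_true]

lemma catalan_conv (n : ℕ) :
    catalan (n + 1) = ∑ k ∈ Finset.range (n + 1), catalan k * catalan (n - k) := by
  rw [catalan_succ]
  exact Fin.sum_univ_eq_sum_range (fun k => catalan k * catalan (n - k)) (n + 1)

lemma lb_eq : ∀ n : ℕ, lcnt (fun t => t.Valid Am ∧ Am 1 t.color = 1) n = catalan n := by
  intro n
  induction n using Nat.strong_induction_on with
  | _ n ih =>
    match n with
    | 0 => rw [lcnt_zero, catalan_zero]
    | (n+1) =>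
      rw [lcnt_succ, catalan_conv]
      refine Finset.sum_congr rfl fun k hk => ?_
      have hk' := Finset.mem_range.mp hk
      rw [tcnt1, cnt_succ, ih k (by omega), ih (n - k) (by omega)]

lemma lc_eq : ∀ n : ℕ, lcnt (fun t => t.Valid Am ∧ Am 2 t.color = 1) n = catalan n := by
  intro n
  induction n using Nat.strong_induction_on with
  | _ n ih =>
    match n with
    | 0 => rw [lcnt_zero, catalan_zero]
    | (n+1) =>
      rw [lcnt_succ, catalan_conv]
      refine Finset.sum_congr rfl fun k hk => ?_
      have hk' := Finset.mem_range.mp hk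
      rw [tcnt2, cnt_succ, ih k (by omega), ih (n - k) (by omega)]

lemma cnt1_succ (n : ℕ) : cnt 1 (n + 1) = catalan n := by rw [cnt_succ, lb_eq]
lemma cnt2_succ (n : ℕ) : cnt 2 (n + 1) = catalan n := by rw [cnt_succ, lc_eq]

lemma key : ∀ n : ℕ, lcnt (fun t => t.Valid Am ∧ Am 0 t.color = 1) n + catalan n =
    2 ^ (n + 1) * catalan n := by
  intro n
  induction n using Nat.strong_induction_on with
  | _ n ih =>
    match n with
    | 0 => rw [lcnt_zero, catalan_zero]; norm_num
    | (n+1) =>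
      set P : CTree F3 → Prop := fun t => t.Valid Am ∧ Am 0 t.color = 1 with hP
      -- recurrence
      have hrec : lcnt P (n+1) =
          ∑ k ∈ Finset.range (n+1), (lcnt P k + 2 * catalan k) * lcnt P (n - k) := by
        rw [lcnt_succ]
        refine Finset.sum_congr rfl fun k hk => ?_
        rw [tcnt0, ← cnt_succ, cnt1_succ, cnt2_succ, cnt_succ]
        rw [hP]
        ring_nf
      -- cast to ℤ
      have ihz : ∀ m, m < n + 1 → (lcnt P m : ℤ) = 2 ^ (m + 1) * catalan m - catalan m := by
        intro m hm
        have h' : (lcnt P m : ℤ) + catalan m = 2 ^ (m + 1) * catalan m := by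
          exact_mod_cast ih m hm
        linarith
      have hcat : (∑ k ∈ Finset.range (n+1), (catalan k : ℤ) * catalan (n - k)) =
          (catalan (n+1) : ℤ) := by
        exact_mod_cast (catalan_conv n).symm
      have hsym : (∑ k ∈ Finset.range (n+1), (2:ℤ) ^ (n - k + 1) * (catalan k * catalan (n - k))) =
          ∑ k ∈ Finset.range (n+1), (2:ℤ) ^ (k + 1) * (catalan k * catalan (n - k)) := by
        have h := Finset.sum_range_reflect
          (fun k => (2:ℤ) ^ (k + 1) * (catalan k * catalan (n - k))) (n + 1)
        rw [← h]
        refine Finset.sum_congr rfl fun k hk => ?_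
        have hk' := Finset.mem_range.mp hk
        have h1 : n + 1 - 1 - k = n - k := by omega
        have h2 : n - (n - k) = k := by omega
        rw [h1, h2]
        ring
      have main : (lcnt P (n+1) : ℤ) = 2 ^ (n + 2) * catalan (n+1) - catalan (n+1) := by
        have hcast : (lcnt P (n+1) : ℤ) =
            ∑ k ∈ Finset.range (n+1),
              ((lcnt P k : ℤ) + 2 * catalan k) * (lcnt P (n - k)) := by
          exact_mod_cast congrArg (Nat.cast : ℕ → ℤ) hrec
        rw [hcast]
        have hterm : ∀ k ∈ Finset.range (n+1),
            ((lcnt P k : ℤ) + 2 * catalan k) * (lcnt P (n - k)) =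
              2 ^ (n + 2) * ((catalan k : ℤ) * catalan (n - k))
              - 2 ^ (k + 1) * ((catalan k : ℤ) * catalan (n - k))
              + 2 ^ (n - k + 1) * ((catalan k : ℤ) * catalan (n - k))
              - (catalan k : ℤ) * catalan (n - k) := by
          intro k hk
          have hk' := Finset.mem_range.mp hk
          rw [ihz k (by omega), ihz (n - k) (by omega)]
          have hpow : (2:ℤ) ^ (k + 1) * 2 ^ (n - k + 1) = 2 ^ (n + 2) := by
            rw [← pow_add]
            congr 1
            omega
          linear_combination (catalan k : ℤ) * catalan (n - k) * hpow
        rw [Finset.sum_congr rfl hterm]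
        rw [Finset.sum_sub_distrib, Finset.sum_add_distrib, Finset.sum_sub_distrib,
          ← Finset.mul_sum, hsym, hcat]
        ring
      have goalz : (lcnt P (n+1) : ℤ) + catalan (n+1) = 2 ^ (n + 2) * catalan (n+1) := by
        linarith [main]
      exact_mod_cast goalz

lemma cnt0_succ (n : ℕ) : cnt 0 (n + 1) = (2 ^ (n + 1) - 1) * catalan n := by
  rw [cnt_succ]
  have h := key n
  have h2 : (2 ^ (n + 1) - 1) * catalan n = 2 ^ (n + 1) * catalan n - 1 * catalan n :=
    Nat.sub_mul _ _ _
  rw [h2, one_mul]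
  omega

lemma colorCount_eq (i : F3) (n : ℕ) : colorCount Am i n = cnt i n := by
  rw [colorCount, cnt, ← Set.ncard_coe_finset]
  congr 1
  ext t
  simp only [Finset.coe_filter, Set.mem_setOf_eq, mem_TF]
  tauto

lemma totalCount_eq (n : ℕ) : totalCount Am n = cnt 0 n + cnt 1 n + cnt 2 n := by
  rw [totalCount, ← valid_split, ← Set.ncard_coe_finset]
  congr 1
  ext t
  simp only [Finset.coe_filter, Set.mem_setOf_eq, mem_TF]
  tauto

end Stmt18Aux

theorem stmt18 :
    (∀ n, 1 ≤ n →
      totalCount (!![1, 1, 1; 0, 1, 0; 0, 0, 1] : Matrix (Fin 3) (Fin 3) ℕ) n =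
        (2 ^ n + 1) * catalan (n - 1)) ∧
    (∀ n, 1 ≤ n →
      colorCount (!![1, 1, 1; 0, 1, 0; 0, 0, 1] : Matrix (Fin 3) (Fin 3) ℕ) 1 n =
        catalan (n - 1)) ∧
    (∀ n, 1 ≤ n →
      colorCount (!![1, 1, 1; 0, 1, 0; 0, 0, 1] : Matrix (Fin 3) (Fin 3) ℕ) 2 n =
        catalan (n - 1)) ∧
    (∀ n, 2 ≤ n →
      colorCount (!![1, 1, 1; 0, 1, 0; 0, 0, 1] : Matrix (Fin 3) (Fin 3) ℕ) 0 n =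
        (2 ^ n - 1) * catalan (n - 1)) := by
  open Stmt18Aux in
  have hA : (!![1, 1, 1; 0, 1, 0; 0, 0, 1] : Matrix (Fin 3) (Fin 3) ℕ) = Stmt18Aux.Am := rfl
  rw [hA]
  refine ⟨?_, ?_, ?_, ?_⟩
  · rintro (_ | n) hn
    · omega
    · rw [Stmt18Aux.totalCount_eq, Stmt18Aux.cnt0_succ, Stmt18Aux.cnt1_succ,
        Stmt18Aux.cnt2_succ, Nat.add_sub_cancel]
      have h1 : 1 ≤ 2 ^ (n + 1) := Nat.one_le_two_pow
      have h2 : (2 ^ (n + 1) - 1) * catalan n = 2 ^ (n + 1) * catalan n - 1 * catalan n :=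
        Nat.sub_mul _ _ _
      have h3 : (2 ^ (n + 1) + 1) * catalan n = 2 ^ (n + 1) * catalan n + 1 * catalan n :=
        Nat.add_mul _ _ _
      have h4 : catalan n ≤ 2 ^ (n + 1) * catalan n :=
        Nat.le_mul_of_pos_left _ (by positivity)
      omega
  · rintro (_ | n) hn
    · omega
    · rw [Stmt18Aux.colorCount_eq, Stmt18Aux.cnt1_succ, Nat.add_sub_cancel]
  · rintro (_ | n) hn
    · omega
    · rw [Stmt18Aux.colorCount_eq, Stmt18Aux.cnt2_succ, Nat.add_sub_cancel]
  · rintro (_ | n) hn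
    · omega
    · rw [Stmt18Aux.colorCount_eq, Stmt18Aux.cnt0_succ, Nat.add_sub_cancel]
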